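/- Suppose N : ℕ → ℝ≥0 satisfies C⁻¹·e^{hL}/L ≤ N(L) ≤ C·e^{hL} for all sufficiently large L, where C, h > 0. Then for every ε > 0 there exists L₀ > 0 such that for every L₁ > 0 there exists L > L₁ with N(L - L₀) ≤ ε · N(L). -/

import Mathlib

/-!
STATEMENT 2: Suppose `N : ℕ → ℝ≥0` satisfies `C⁻¹·e^{hL}/L ≤ N L ≤ C·e^{hL}` for all
sufficiently large `L`, where `C, h > 0`.  Then for every `ε > 0` there exists `L₀ > 0`
such that for every `L₁ > 0` there exists `L > L₁` with `N (L - L₀) ≤ ε · N L`.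
-/

set_option maxHeartbeats 1000000 in
theorem stmt2 (N : ℕ → ℝ) (C h : ℝ) (hC : 0 < C) (hh : 0 < h)
    (hN0 : ∀ L, 0 ≤ N L) (hmono : Monotone N)
    (hbound : ∃ L₂ : ℕ, ∀ L : ℕ, L₂ ≤ L →
      C⁻¹ * Real.exp (h * L) / L ≤ N L ∧ N L ≤ C * Real.exp (h * L)) :
    ∀ ε : ℝ, 0 < ε → ∃ L₀ : ℕ, 0 < L₀ ∧
      ∀ L₁ : ℕ, 0 < L₁ → ∃ L : ℕ, L₁ < L ∧ N (L - L₀) ≤ ε * N L := by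
  obtain ⟨L₂, hL₂⟩ := hbound
  intro ε hε
  set L₀ : ℕ := ⌈(Real.log ε⁻¹ + 1) / h⌉₊ + 1 with hL₀def
  refine ⟨L₀, Nat.succ_pos _, ?_⟩
  intro L₁ hL₁
  by_contra hcon
  push_neg at hcon
  -- hcon : ∀ L, L₁ < L → ε * N L < N (L - L₀)
  have hL₀1 : 1 ≤ L₀ := Nat.le_add_left 1 _
  have hhL₀ : Real.log ε⁻¹ + 1 ≤ h * L₀ := by
    rw [← div_le_iff₀' hh]
    calc (Real.log ε⁻¹ + 1) / h ≤ (⌈(Real.log ε⁻¹ + 1) / h⌉₊ : ℝ) := Nat.le_ceil _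
      _ ≤ (L₀ : ℝ) := by exact_mod_cast Nat.le_succ _
  have hεinv : (0:ℝ) < ε⁻¹ := by positivity
  have key : ∀ k : ℕ, N (L₁ + k * L₀) ≤ ε⁻¹ ^ k * N L₁ := by
    intro k
    induction k with
    | zero => simp
    | succ k ih =>
      have h1 : L₁ < L₁ + (k + 1) * L₀ := by nlinarith [hL₀1]
      have h2 := hcon _ h1
      have h3 : L₁ + (k + 1) * L₀ - L₀ = L₁ + k * L₀ := by
        have : (k + 1) * L₀ = k * L₀ + L₀ := by ring
        omega
      rw [h3] at h2
      have h4 : N (L₁ + (k + 1) * L₀) ≤ ε⁻¹ * N (L₁ + k * L₀) := by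
        rw [inv_mul_eq_div, le_div_iff₀ hε]
        nlinarith [h2]
      calc N (L₁ + (k + 1) * L₀) ≤ ε⁻¹ * N (L₁ + k * L₀) := h4
        _ ≤ ε⁻¹ * (ε⁻¹ ^ k * N L₁) := by
            exact mul_le_mul_of_nonneg_left ih hεinv.le
        _ = ε⁻¹ ^ (k + 1) * N L₁ := by ring
  set A := N L₁ with hA
  have hA0 : 0 ≤ A := hN0 L₁
  set B : ℝ := C * A / Real.exp (h * L₁) with hB
  have hB0 : 0 ≤ B := by positivity
  set k : ℕ := max (max L₁ L₀) (max L₂ (⌈54 * B⌉₊ + 1)) with hk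
  have hkL₁ : L₁ ≤ k := le_max_of_le_left (le_max_left _ _)
  have hkL₀ : L₀ ≤ k := le_max_of_le_left (le_max_right _ _)
  have hk1 : 1 ≤ k := le_trans hL₀1 hkL₀
  have hkB : 54 * B + 1 ≤ (k : ℝ) := by
    have h1 : (⌈54 * B⌉₊ + 1 : ℕ) ≤ k := le_max_of_le_right (le_max_right _ _)
    have h2 : 54 * B ≤ (⌈54 * B⌉₊ : ℝ) := Nat.le_ceil _
    have h3 : ((⌈54 * B⌉₊ + 1 : ℕ) : ℝ) ≤ (k : ℝ) := by exact_mod_cast h1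
    push_cast at h3
    linarith
  have hkL₂ : L₂ ≤ k := le_max_of_le_right (le_max_left _ _)
  clear_value k
  set L : ℕ := L₁ + k * L₀ with hLdef
  have hLL₂ : L₂ ≤ L := by
    have : k ≤ k * L₀ := Nat.le_mul_of_pos_right _ hL₀1
    omega
  have hlow := (hL₂ L hLL₂).1
  have hup := key k
  have hL0 : (0:ℝ) < (L : ℝ) := by
    have : 0 < L := by omega
    exact_mod_cast this
  -- exp bound: exp (h * L) ≥ exp (h * L₁) * (ε⁻¹ ^ k * exp k)
  have hexp1 : Real.exp (h * L₁) * (ε⁻¹ ^ k * Real.exp k) ≤ Real.exp (h * L) := by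
    have hcast : (L : ℝ) = (L₁ : ℝ) + (k : ℝ) * (L₀ : ℝ) := by
      rw [hLdef]; push_cast; ring
    rw [hcast, mul_add, Real.exp_add]
    have h1 : Real.exp ((k : ℝ) * (Real.log ε⁻¹ + 1)) ≤ Real.exp (h * ((k : ℝ) * (L₀ : ℝ))) := by
      apply Real.exp_le_exp.2
      have hk0 : (0:ℝ) ≤ (k : ℝ) := by positivity
      nlinarith [hhL₀]
    have h2 : Real.exp ((k : ℝ) * (Real.log ε⁻¹ + 1)) = ε⁻¹ ^ k * Real.exp k := by
      rw [Real.exp_nat_mul, Real.exp_add, Real.exp_log hεinv, mul_pow,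
        ← Real.exp_nat_mul, mul_one]
    rw [← h2] at *
    exact mul_le_mul_of_nonneg_left h1 (Real.exp_pos _).le
  have hεk : (0:ℝ) < ε⁻¹ ^ k := by positivity
  -- chain: ε⁻¹^k * (C⁻¹ * exp(h*L₁) * exp k / L) ≤ ε⁻¹^k * A
  have hchain : ε⁻¹ ^ k * (C⁻¹ * Real.exp (h * L₁) * Real.exp k / L) ≤ ε⁻¹ ^ k * A := by
    calc ε⁻¹ ^ k * (C⁻¹ * Real.exp (h * L₁) * Real.exp k / L)
        = C⁻¹ * (Real.exp (h * L₁) * (ε⁻¹ ^ k * Real.exp k)) / L := by ring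
      _ ≤ C⁻¹ * Real.exp (h * L) / L := by gcongr
      _ ≤ N L := hlow
      _ ≤ ε⁻¹ ^ k * A := hup
  have hdiv : C⁻¹ * Real.exp (h * L₁) * Real.exp k / L ≤ A :=
    le_of_mul_le_mul_left hchain hεk
  have hE : (0:ℝ) < Real.exp (h * L₁) := Real.exp_pos _
  have hdiv' : C⁻¹ * Real.exp (h * L₁) * Real.exp k ≤ A * L := by
    rw [div_le_iff₀ hL0] at hdiv; linarith
  have hexpk : Real.exp k ≤ B * L := by
    rw [hB, div_mul_eq_mul_div, le_div_iff₀ hE]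
    calc Real.exp ((k:ℝ)) * Real.exp (h * L₁)
        = C * (C⁻¹ * Real.exp (h * L₁) * Real.exp ((k:ℝ))) := by
          field_simp
      _ ≤ C * (A * L) := mul_le_mul_of_nonneg_left hdiv' hC.le
      _ = C * A * L := by ring
  have hcube : ((k:ℝ)) ^ 3 / 27 ≤ Real.exp k := by
    have h1 : (k:ℝ) / 3 + 1 ≤ Real.exp ((k:ℝ) / 3) := Real.add_one_le_exp _
    have h2 : Real.exp ((k:ℝ)) = Real.exp ((k:ℝ) / 3) ^ (3:ℕ) := by
      rw [← Real.exp_nat_mul]; congr 1; push_cast; ring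
    have hk0 : (0:ℝ) ≤ (k:ℝ) / 3 := by positivity
    rw [h2]
    calc ((k:ℝ)) ^ 3 / 27 = ((k:ℝ) / 3) ^ 3 := by ring
      _ ≤ ((k:ℝ) / 3 + 1) ^ 3 := by nlinarith
      _ ≤ Real.exp ((k:ℝ) / 3) ^ (3:ℕ) := pow_le_pow_left₀ (by positivity) h1 3
  clear_value L
  have hL2k : (L:ℝ) ≤ 2 * (k:ℝ) ^ 2 := by
    have h1 : k * L₀ ≤ k * k := Nat.mul_le_mul_left k hkL₀
    have hnat : L ≤ 2 * k ^ 2 := by rw [hLdef]; nlinarith [hkL₁, hk1]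
    exact_mod_cast hnat
  have hk1' : (1:ℝ) ≤ (k:ℝ) := by exact_mod_cast hk1
  nlinarith [mul_le_mul_of_nonneg_right hkB (sq_nonneg ((k:ℝ))),
    mul_le_mul_of_nonneg_left hL2k hB0, hexpk, hcube, sq_nonneg ((k:ℝ)), hk1']
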